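/- Let δ_m, δ_M be real numbers with δ_m < 0 < δ_M and δ_M > −δ_m, and consider the five numbers 4δ_M^3, 4δ_m^3, 3δ_mδ_M^2 + δ_M^3, 3δ_m^2δ_M + δ_m^3, and 2δ_mδ_M(δ_m + δ_M). Then the maximum of these five numbers is 4δ_M^3; moreover, if δ_M < −2δ_m their minimum is 4δ_m^3, while if δ_M > −2δ_m their minimum is 2δ_mδ_M(δ_m + δ_M). -/
import Mathlib

/-- Scenario `A_3` for the three-body Hamiltonian on four parties: if `δ_m < 0 < δ_M`
and `δ_M > -δ_m`, then among the five eigenvalues the maximum is `4δ_M^3`; moreover,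
if `δ_M < -2δ_m` the minimum is `4δ_m^3`, while if `δ_M > -2δ_m` the minimum is
`2δ_mδ_M(δ_m + δ_M)`. -/
theorem three_body_four_party_A3 (δm δM : ℝ) (h1 : δm < 0) (h2 : 0 < δM) (h3 : δM > -δm) :
    IsGreatest
      ({4 * δM ^ 3, 4 * δm ^ 3, 3 * δm * δM ^ 2 + δM ^ 3, 3 * δm ^ 2 * δM + δm ^ 3,
        2 * δm * δM * (δm + δM)} : Set ℝ) (4 * δM ^ 3) ∧
    (δM < -2 * δm →
      IsLeast
        ({4 * δM ^ 3, 4 * δm ^ 3, 3 * δm * δM ^ 2 + δM ^ 3, 3 * δm ^ 2 * δM + δm ^ 3,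
          2 * δm * δM * (δm + δM)} : Set ℝ) (4 * δm ^ 3)) ∧
    (δM > -2 * δm →
      IsLeast
        ({4 * δM ^ 3, 4 * δm ^ 3, 3 * δm * δM ^ 2 + δM ^ 3, 3 * δm ^ 2 * δM + δm ^ 3,
          2 * δm * δM * (δm + δM)} : Set ℝ) (2 * δm * δM * (δm + δM))) := by
  refine ⟨⟨Set.mem_insert _ _, ?_⟩, fun hc => ⟨by simp [Set.mem_insert_iff], ?_⟩,
    fun hc => ⟨by simp [Set.mem_insert_iff], ?_⟩⟩ <;>
  · intro x hx
    simp only [Set.mem_insert_iff, Set.mem_singleton_iff] at hx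
    rcases hx with rfl | rfl | rfl | rfl | rfl <;>
      nlinarith [sq_nonneg (δm + δM), sq_nonneg (δm - δM), sq_nonneg δm, sq_nonneg δM,
        mul_pos h2 h2, sq_nonneg (δM + 2*δm), sq_nonneg (2*δM + δm)]
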